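/- Let p ≥ 1, let λ_1, …, λ_p be distinct positive reals, let w_1, …, w_p be real weights, let δ > 0, and set h(s) = Σ_{k=1}^p w_k e^{−λ_k s}. Define the increment kernel G₀ : ℝ → ℝ by G₀(v) = ∫_{max(v,0)}^{δ} h(s−v) ds for v ≤ δ and G₀(v) = 0 for v > δ. Then ∫_ℝ G₀(v)² dv = Σ_{i=1}^p 2 β_i λ_i^{−2} (e^{−λ_i δ} − 1 + λ_i δ), where β_i = w_i Σ_{j=1}^p w_j/(λ_i + λ_j). Consequently the variance of the increments ΔY of the integrated CARMA process equals Var L(1) times this quantity. -/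

import Mathlib

open MeasureTheory Set

/- ### Auxiliary lemmas -/

lemma intervalIntegral_exp_mul (c a b : ℝ) (hc : c ≠ 0) :
    ∫ s in a..b, Real.exp (c * s) = (Real.exp (c * b) - Real.exp (c * a)) / c := by
  have h : ∀ x : ℝ, HasDerivAt (fun s => Real.exp (c * s) / c) (Real.exp (c * x)) x := by
    intro x
    have h1 : HasDerivAt (fun s : ℝ => c * s) c x := by simpa using (hasDerivAt_id x).const_mul c
    have h2 := (h1.exp).div_const c
    simpa [mul_div_assoc, mul_div_cancel_right₀ _ hc] using h2
  rw [intervalIntegral.integral_eq_sub_of_hasDerivAt (fun x _ => h x)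
    ((Real.continuous_exp.comp (continuous_const.mul continuous_id)).intervalIntegrable a b)]
  ring

lemma integrableOn_exp_mul_Iic' {c : ℝ} (hc : 0 < c) (b : ℝ) :
    IntegrableOn (fun v => Real.exp (c * v)) (Iic b) := by
  rw [← (Measure.measurePreserving_neg (volume : Measure ℝ)).integrableOn_comp_preimage
      (Homeomorph.neg ℝ).measurableEmbedding]
  simp only [Function.comp_def, neg_preimage, neg_Iic]
  rw [integrableOn_Ici_iff_integrableOn_Ioi]
  simpa [mul_neg, neg_mul] using exp_neg_integrableOn_Ioi (-b) hc

lemma integral_exp_mul_Iic' {c : ℝ} (hc : 0 < c) (b : ℝ) :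
    ∫ v in Iic b, Real.exp (c * v) = Real.exp (c * b) / c := by
  have h1 : ∫ v in Iic b, Real.exp (c * v) = ∫ x in Ioi (-b), Real.exp (-(c * x)) := by
    rw [← integral_comp_neg_Iic]
    simp [mul_neg]
  rw [h1]
  calc ∫ x in Ioi (-b), Real.exp (-(c * x))
      = ∫ x in Ioi (-b), (fun y => Real.exp (-y)) (c * x) := by simp
    _ = c⁻¹ • ∫ y in Ioi (c * (-b)), Real.exp (-y) := by
        rw [MeasureTheory.integral_comp_mul_left_Ioi (fun y => Real.exp (-y)) _ hc]
    _ = Real.exp (c * b) / c := by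
        rw [integral_exp_neg_Ioi, smul_eq_mul]
        ring_nf

lemma pair_integral (a b lamI lamJ δ : ℝ) (hi : lamI ≠ 0) (hj : lamJ ≠ 0)
    (hij : lamI + lamJ ≠ 0) :
    ∫ v in (0:ℝ)..δ, (1 - a * Real.exp (lamI * v)) * (1 - b * Real.exp (lamJ * v))
      = δ - a * (Real.exp (lamI * δ) - 1) / lamI - b * (Real.exp (lamJ * δ) - 1) / lamJ
        + a * b * (Real.exp ((lamI + lamJ) * δ) - 1) / (lamI + lamJ) := by
  have h : ∀ x : ℝ, HasDerivAt
      (fun v => v - a * Real.exp (lamI * v) / lamI - b * Real.exp (lamJ * v) / lamJ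
        + a * b * Real.exp ((lamI + lamJ) * v) / (lamI + lamJ))
      ((1 - a * Real.exp (lamI * x)) * (1 - b * Real.exp (lamJ * x))) x := by
    intro x
    have e1 : HasDerivAt (fun v : ℝ => lamI * v) lamI x := by
      simpa using (hasDerivAt_id x).const_mul lamI
    have e2 : HasDerivAt (fun v : ℝ => lamJ * v) lamJ x := by
      simpa using (hasDerivAt_id x).const_mul lamJ
    have e3 : HasDerivAt (fun v : ℝ => (lamI + lamJ) * v) (lamI + lamJ) x := by
      simpa using (hasDerivAt_id x).const_mul (lamI + lamJ)
    have d1 := ((e1.exp.const_mul a).div_const lamI)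
    have d2 := ((e2.exp.const_mul b).div_const lamJ)
    have d3 := ((e3.exp.const_mul (a * b)).div_const (lamI + lamJ))
    have key := (((hasDerivAt_id x).sub d1).sub d2).add d3
    refine key.congr_deriv ?_
    have hexp : Real.exp ((lamI + lamJ) * x) = Real.exp (lamI * x) * Real.exp (lamJ * x) := by
      rw [← Real.exp_add]; ring_nf
    rw [hexp]
    field_simp
    ring
  rw [intervalIntegral.integral_eq_sub_of_hasDerivAt (fun x _ => h x)
    ((by fun_prop : Continuous fun x : ℝ =>
      (1 - a * Real.exp (lamI * x)) * (1 - b * Real.exp (lamJ * x))).intervalIntegrable _ _)]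
  simp only [mul_zero, Real.exp_zero]
  ring

/-- The increment kernel of the integrated CARMA-type mixture process with kernel
`h(s) = Σ_k w_k e^{−λ_k s}`:
`G_h(v) = ∫_{max(v, hδ)}^{(h+1)δ} h(s−v) ds` for `v ≤ (h+1)δ`, and `0` otherwise. -/
noncomputable def carmaIncrementKernel {p : ℕ} (lam w : Fin p → ℝ) (δ : ℝ) (h : ℕ)
    (v : ℝ) : ℝ :=
  if v ≤ ((h : ℝ) + 1) * δ then
    ∫ s in max v ((h : ℝ) * δ)..((h : ℝ) + 1) * δ,
      ∑ k : Fin p, w k * Real.exp (-lam k * (s - v))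
  else 0

lemma kernel_eq {p : ℕ} (lam w : Fin p → ℝ) (δ : ℝ) (hpos : ∀ i, 0 < lam i) (v : ℝ) :
    carmaIncrementKernel lam w δ 0 v =
      if v ≤ δ then ∑ k : Fin p, w k / lam k *
        (Real.exp (lam k * (v - max v 0)) - Real.exp (lam k * (v - δ))) else 0 := by
  unfold carmaIncrementKernel
  simp only [Nat.cast_zero, zero_add, one_mul, zero_mul]
  split_ifs with h
  · rw [intervalIntegral.integral_finset_sum]
    · refine Finset.sum_congr rfl fun k _ => ?_
      calc ∫ s in (max v 0)..δ, w k * Real.exp (-lam k * (s - v))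
          = ∫ s in (max v 0)..δ, (w k * Real.exp (lam k * v)) * Real.exp ((-lam k) * s) := by
            apply intervalIntegral.integral_congr; intro s _
            simp only []
            rw [mul_assoc, ← Real.exp_add]
            congr 2
            ring
        _ = (w k * Real.exp (lam k * v)) *
              ((Real.exp ((-lam k) * δ) - Real.exp ((-lam k) * max v 0)) / (-lam k)) := by
            rw [intervalIntegral.integral_const_mul,
              intervalIntegral_exp_mul _ _ _ (neg_ne_zero.mpr (hpos k).ne')]
        _ = w k / lam k * (Real.exp (lam k * (v - max v 0)) - Real.exp (lam k * (v - δ))) := by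
            rw [show lam k * (v - max v 0) = lam k * v + (-lam k) * max v 0 by ring,
              show lam k * (v - δ) = lam k * v + (-lam k) * δ by ring,
              Real.exp_add, Real.exp_add]
            field_simp
            ring
    · intro k _
      exact (by fun_prop : Continuous fun s : ℝ =>
        w k * Real.exp (-lam k * (s - v))).intervalIntegrable _ _
  · rfl

/- ### Main theorem -/

theorem integrated_CARMA_variance (p : ℕ) (hp : 1 ≤ p) (lam w : Fin p → ℝ)
    (hpos : ∀ i, 0 < lam i) (hdist : Function.Injective lam) (δ : ℝ) (hδ : 0 < δ)
    (varL1 : ℝ) :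
    ((∫ v : ℝ, (carmaIncrementKernel lam w δ 0 v) ^ 2)
        = ∑ i : Fin p, 2 * (w i * ∑ j : Fin p, w j / (lam i + lam j)) * (lam i) ^ (-2 : ℤ)
            * (Real.exp (-lam i * δ) - 1 + lam i * δ))
    ∧ (varL1 * ∫ v : ℝ, (carmaIncrementKernel lam w δ 0 v) ^ 2
        = varL1 * ∑ i : Fin p, 2 * (w i * ∑ j : Fin p, w j / (lam i + lam j))
            * (lam i) ^ (-2 : ℤ) * (Real.exp (-lam i * δ) - 1 + lam i * δ)) := by
  have hne : ∀ i, lam i ≠ 0 := fun i => (hpos i).ne'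
  have hsumpos : ∀ i j : Fin p, 0 < lam i + lam j := fun i j => add_pos (hpos i) (hpos j)
  have hsumne : ∀ i j : Fin p, lam i + lam j ≠ 0 := fun i j => (hsumpos i j).ne'
  set F : ℝ → ℝ := fun v => (carmaIncrementKernel lam w δ 0 v) ^ 2 with hF
  set A : Fin p → ℝ := fun i => w i / lam i * (1 - Real.exp (-(lam i * δ))) with hA
  set E : Fin p → ℝ := fun i => Real.exp (-(lam i * δ)) with hE
  set g1 : ℝ → ℝ := fun v => ∑ i : Fin p, A i * Real.exp (lam i * v) with hg1
  set g2 : ℝ → ℝ := fun v => ∑ i : Fin p,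
    w i / lam i * (1 - E i * Real.exp (lam i * v)) with hg2
  -- pointwise identification
  have hIic : EqOn F (fun v => (g1 v) ^ 2) (Iic (0:ℝ)) := by
    intro v hv
    simp only [mem_Iic] at hv
    have : carmaIncrementKernel lam w δ 0 v = g1 v := by
      rw [kernel_eq lam w δ hpos v, if_pos (hv.trans hδ.le), hg1]
      refine Finset.sum_congr rfl fun k _ => ?_
      rw [max_eq_right hv, sub_zero,
        show lam k * (v - δ) = lam k * v + (-(lam k * δ)) by ring, Real.exp_add, hA]
      simp only []
      ring
    simp [hF, this]
  have hIoc : EqOn F (fun v => (g2 v) ^ 2) (Ioc (0:ℝ) δ) := by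
    intro v hv
    have : carmaIncrementKernel lam w δ 0 v = g2 v := by
      rw [kernel_eq lam w δ hpos v, if_pos hv.2, hg2]
      refine Finset.sum_congr rfl fun k _ => ?_
      rw [max_eq_left hv.1.le, sub_self,
        show lam k * (v - δ) = -(lam k * δ) + lam k * v by ring, Real.exp_add, hE]
      simp only [mul_zero, Real.exp_zero]
    simp [hF, this]
  have hIoi : EqOn F (fun _ => (0:ℝ)) (Ioi δ) := by
    intro v hv
    simp only [mem_Ioi] at hv
    simp [hF, kernel_eq lam w δ hpos v, not_le.mpr hv]
  -- expansions of the squares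
  have hg1sq : ∀ v : ℝ, (g1 v) ^ 2 = ∑ i : Fin p, ∑ j : Fin p,
      (A i * A j) * Real.exp ((lam i + lam j) * v) := by
    intro v
    rw [sq, hg1]
    rw [Finset.sum_mul_sum]
    refine Finset.sum_congr rfl fun i _ => Finset.sum_congr rfl fun j _ => ?_
    rw [show (lam i + lam j) * v = lam i * v + lam j * v by ring, Real.exp_add]
    ring
  have hg2sq : ∀ v : ℝ, (g2 v) ^ 2 = ∑ i : Fin p, ∑ j : Fin p,
      (w i / lam i * (w j / lam j)) *
        ((1 - E i * Real.exp (lam i * v)) * (1 - E j * Real.exp (lam j * v))) := by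
    intro v
    rw [sq, hg2, Finset.sum_mul_sum]
    refine Finset.sum_congr rfl fun i _ => Finset.sum_congr rfl fun j _ => ?_
    ring
  -- integrability
  have int1 : IntegrableOn (fun v => (g1 v) ^ 2) (Iic (0:ℝ)) volume := by
    have : (fun v => (g1 v) ^ 2) = fun v => ∑ i : Fin p, ∑ j : Fin p,
        (A i * A j) * Real.exp ((lam i + lam j) * v) := funext hg1sq
    rw [this]
    refine integrable_finset_sum _ fun i _ => integrable_finset_sum _ fun j _ => ?_
    exact (integrableOn_exp_mul_Iic' (hsumpos i j) 0).const_mul _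
  have intG_Iic : IntegrableOn F (Iic (0:ℝ)) volume :=
    (integrableOn_congr_fun hIic measurableSet_Iic).mpr int1
  have cont2 : Continuous fun v => (g2 v) ^ 2 := by
    apply Continuous.pow
    rw [hg2]
    exact continuous_finset_sum _ fun i _ => by fun_prop
  have intG_Ioc : IntegrableOn F (Ioc (0:ℝ) δ) volume :=
    (integrableOn_congr_fun hIoc measurableSet_Ioc).mpr (cont2.integrableOn_Ioc)
  have intG_Ioi : IntegrableOn F (Ioi δ) volume :=
    (integrableOn_congr_fun hIoi measurableSet_Ioi).mpr (integrableOn_zero)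
  have intG_Ioi0 : IntegrableOn F (Ioi (0:ℝ)) volume := by
    rw [← Ioc_union_Ioi_eq_Ioi hδ.le, integrableOn_union]
    exact ⟨intG_Ioc, intG_Ioi⟩
  -- splitting
  have split : (∫ v : ℝ, F v) = (∫ v in Iic (0:ℝ), F v) + ∫ v in Ioc (0:ℝ) δ, F v := by
    rw [← intervalIntegral.integral_Iic_add_Ioi intG_Iic intG_Ioi0]
    congr 1
    rw [← Ioc_union_Ioi_eq_Ioi hδ.le,
      setIntegral_union (Ioc_disjoint_Ioi le_rfl) measurableSet_Ioi intG_Ioc intG_Ioi,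
      setIntegral_congr_fun measurableSet_Ioi hIoi]
    simp
  -- value on Iic 0
  have EIic : (∫ v in Iic (0:ℝ), F v)
      = ∑ i : Fin p, ∑ j : Fin p, (A i * A j) / (lam i + lam j) := by
    rw [setIntegral_congr_fun measurableSet_Iic hIic]
    simp only [hg1sq]
    rw [integral_finset_sum _ fun i _ => integrable_finset_sum _ fun j _ =>
      (integrableOn_exp_mul_Iic' (hsumpos i j) 0).const_mul _]
    refine Finset.sum_congr rfl fun i _ => ?_
    rw [integral_finset_sum _ fun j _ => (integrableOn_exp_mul_Iic' (hsumpos i j) 0).const_mul _]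
    refine Finset.sum_congr rfl fun j _ => ?_
    rw [integral_const_mul, integral_exp_mul_Iic' (hsumpos i j) 0]
    simp [mul_zero, Real.exp_zero, div_eq_mul_inv]
  -- value on Ioc 0 δ
  have EIoc : (∫ v in Ioc (0:ℝ) δ, F v)
      = ∑ i : Fin p, ∑ j : Fin p, (w i / lam i * (w j / lam j)) *
          (δ - E i * (Real.exp (lam i * δ) - 1) / lam i
            - E j * (Real.exp (lam j * δ) - 1) / lam j
            + E i * E j * (Real.exp ((lam i + lam j) * δ) - 1) / (lam i + lam j)) := by
    rw [setIntegral_congr_fun measurableSet_Ioc hIoc, ← intervalIntegral.integral_of_le hδ.le]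
    simp only [hg2sq]
    have hc : ∀ i j : Fin p, Continuous fun v : ℝ => (w i / lam i * (w j / lam j)) *
        ((1 - E i * Real.exp (lam i * v)) * (1 - E j * Real.exp (lam j * v))) :=
      fun i j => by fun_prop
    rw [intervalIntegral.integral_finset_sum (fun i _ =>
      ((continuous_finset_sum _ fun j _ => hc i j).intervalIntegrable _ _))]
    refine Finset.sum_congr rfl fun i _ => ?_
    rw [intervalIntegral.integral_finset_sum (fun j _ => (hc i j).intervalIntegrable _ _)]
    refine Finset.sum_congr rfl fun j _ => ?_
    rw [intervalIntegral.integral_const_mul,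
      pair_integral (E i) (E j) (lam i) (lam j) δ (hne i) (hne j) (hsumne i j)]
  -- the right-hand side as a double sum
  have RHS : (∑ i : Fin p, 2 * (w i * ∑ j : Fin p, w j / (lam i + lam j)) * (lam i) ^ (-2 : ℤ)
        * (Real.exp (-lam i * δ) - 1 + lam i * δ))
      = ∑ i : Fin p, ∑ j : Fin p, 2 * (w i * (w j / (lam i + lam j))) * (lam i) ^ (-2 : ℤ)
        * (Real.exp (-lam i * δ) - 1 + lam i * δ) := by
    refine Finset.sum_congr rfl fun i _ => ?_
    rw [Finset.mul_sum, Finset.mul_sum, Finset.sum_mul, Finset.sum_mul]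
  -- main identity
  have pointwise : ∀ i j : Fin p,
      A i * A j / (lam i + lam j) + w i / lam i * (w j / lam j) *
          (δ - E i * (Real.exp (lam i * δ) - 1) / lam i
            - E j * (Real.exp (lam j * δ) - 1) / lam j
            + E i * E j * (Real.exp ((lam i + lam j) * δ) - 1) / (lam i + lam j))
        = (2 * (w i * (w j / (lam i + lam j))) * (lam i) ^ (-2 : ℤ)
              * (Real.exp (-lam i * δ) - 1 + lam i * δ)
            + 2 * (w j * (w i / (lam j + lam i))) * (lam j) ^ (-2 : ℤ)
              * (Real.exp (-lam j * δ) - 1 + lam j * δ)) / 2 := by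
    intro i j
    have hXY : Real.exp ((lam i + lam j) * δ)
        = Real.exp (lam i * δ) * Real.exp (lam j * δ) := by
      rw [← Real.exp_add]; ring_nf
    have hij := hsumne i j
    have hji : lam j + lam i ≠ 0 := by rw [add_comm]; exact hij
    have hi := hne i
    have hj := hne j
    simp only [hA, hE, hXY, neg_mul, Real.exp_neg, zpow_neg, zpow_two]
    set X := Real.exp (lam i * δ) with hXdef
    set Y := Real.exp (lam j * δ) with hYdef
    have hX : X ≠ 0 := Real.exp_ne_zero _
    have hY : Y ≠ 0 := Real.exp_ne_zero _
    field_simp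
    ring
  have main : (∫ v : ℝ, F v)
      = ∑ i : Fin p, 2 * (w i * ∑ j : Fin p, w j / (lam i + lam j)) * (lam i) ^ (-2 : ℤ)
          * (Real.exp (-lam i * δ) - 1 + lam i * δ) := by
    rw [split, EIic, EIoc, RHS, ← Finset.sum_add_distrib]
    have swap : (∑ i : Fin p, ∑ j : Fin p, 2 * (w j * (w i / (lam j + lam i)))
          * (lam j) ^ (-2 : ℤ) * (Real.exp (-lam j * δ) - 1 + lam j * δ))
        = ∑ i : Fin p, ∑ j : Fin p, 2 * (w i * (w j / (lam i + lam j)))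
          * (lam i) ^ (-2 : ℤ) * (Real.exp (-lam i * δ) - 1 + lam i * δ) :=
      Finset.sum_comm
    calc (∑ i : Fin p, ((∑ j : Fin p, A i * A j / (lam i + lam j))
            + ∑ j : Fin p, w i / lam i * (w j / lam j) *
              (δ - E i * (Real.exp (lam i * δ) - 1) / lam i
                - E j * (Real.exp (lam j * δ) - 1) / lam j
                + E i * E j * (Real.exp ((lam i + lam j) * δ) - 1) / (lam i + lam j))))
        = ∑ i : Fin p, ∑ j : Fin p,
            (2 * (w i * (w j / (lam i + lam j))) * (lam i) ^ (-2 : ℤ)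
              * (Real.exp (-lam i * δ) - 1 + lam i * δ)
            + 2 * (w j * (w i / (lam j + lam i))) * (lam j) ^ (-2 : ℤ)
              * (Real.exp (-lam j * δ) - 1 + lam j * δ)) / 2 := by
          refine Finset.sum_congr rfl fun i _ => ?_
          rw [← Finset.sum_add_distrib]
          exact Finset.sum_congr rfl fun j _ => pointwise i j
      _ = ((∑ i : Fin p, ∑ j : Fin p, 2 * (w i * (w j / (lam i + lam j)))
              * (lam i) ^ (-2 : ℤ) * (Real.exp (-lam i * δ) - 1 + lam i * δ))
            + ∑ i : Fin p, ∑ j : Fin p, 2 * (w j * (w i / (lam j + lam i)))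
              * (lam j) ^ (-2 : ℤ) * (Real.exp (-lam j * δ) - 1 + lam j * δ)) / 2 := by
          simp only [← Finset.sum_div, Finset.sum_add_distrib]
      _ = ∑ i : Fin p, ∑ j : Fin p, 2 * (w i * (w j / (lam i + lam j)))
            * (lam i) ^ (-2 : ℤ) * (Real.exp (-lam i * δ) - 1 + lam i * δ) := by
          rw [swap, add_self_div_two]
  exact ⟨main, by rw [main]⟩
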